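/- Consider the extended finite-horizon LTV system on [0,T] with outputs z, e_I, e_E and the matrices Q:=𝒞_Iᵀ𝒞_I, S:=𝒞_Iᵀ𝒟_I, R:=𝒟_Iᵀ𝒟_I−γ²·diag(0_{n_w}, I_{n_d}) where 𝒟_I:=[𝒟_{Iw} 𝒟_{Id}]. Suppose ε>0, γ>0, M:[0,T]→S^{n_z} is continuous, and P:[0,T]→S^{n} is continuously differentiable with, for all t∈[0,T], [[P'+𝒜ᵀP+P𝒜, Pℬ],[ℬᵀP, 0]] + [[Q,S],[Sᵀ,R]] + [𝒞_z 𝒟_z]ᵀM[𝒞_z 𝒟_z] + εI negative semidefinite. Then for all continuous inputs w, d and the trajectory x with x(0)=0, the integrated dissipation inequality holds: x(T)ᵀP(T)x(T) + ∫₀ᵀ z(t)ᵀM(t)z(t) dt + ∫₀ᵀ‖e_I(t)‖² dt ≤ (γ²−ε) ∫₀ᵀ‖d(t)‖² dt. -/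

import Mathlib

open Matrix Set

/-- The matrix appearing in the robust-performance differential LMI. -/
noncomputable def dlmiRob {ι κ σ : Type*} [Fintype ι] [Fintype κ] [Fintype σ]
    [DecidableEq ι] [DecidableEq κ]
    (P' P 𝒜 : Matrix ι ι ℝ) (ℬ : Matrix ι κ ℝ)
    (Q : Matrix ι ι ℝ) (S : Matrix ι κ ℝ) (R : Matrix κ κ ℝ)
    (Cz : Matrix σ ι ℝ) (Dz : Matrix σ κ ℝ) (M : Matrix σ σ ℝ) (ε : ℝ) :
    Matrix (ι ⊕ κ) (ι ⊕ κ) ℝ :=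
  fromBlocks (P' + 𝒜ᵀ * P + P * 𝒜) (P * ℬ) (ℬᵀ * P) 0
    + fromBlocks Q S Sᵀ R
    + (fromCols Cz Dz)ᵀ * M * (fromCols Cz Dz)
    + ε • 1


lemma dp_self_nonneg {m : ℕ} (v : Fin m → ℝ) : 0 ≤ v ⬝ᵥ v := by
  classical
  have : v ⬝ᵥ v = ∑ i, v i * v i := rfl
  rw [this]
  exact Finset.sum_nonneg fun i _ => mul_self_nonneg _

lemma contOn_dot {m : ℕ} {s : Set ℝ} {u v : ℝ → Fin m → ℝ}
    (hu : ∀ i, ContinuousOn (fun t => u t i) s) (hv : ∀ i, ContinuousOn (fun t => v t i) s) :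
    ContinuousOn (fun t => u t ⬝ᵥ v t) s := by
  have : (fun t => u t ⬝ᵥ v t) = fun t => ∑ i, u t i * v t i := rfl
  rw [this]
  exact continuousOn_finset_sum _ fun i _ => (hu i).mul (hv i)

lemma contOn_mulVec {m k : ℕ} {s : Set ℝ} {A : ℝ → Matrix (Fin m) (Fin k) ℝ} {u : ℝ → Fin k → ℝ}
    (hA : ∀ i j, ContinuousOn (fun t => A t i j) s) (hu : ∀ j, ContinuousOn (fun t => u t j) s)
    (i : Fin m) : ContinuousOn (fun t => (A t *ᵥ u t) i) s := by
  have : (fun t => (A t *ᵥ u t) i) = fun t => ∑ j, A t i j * u t j := rfl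
  rw [this]
  exact continuousOn_finset_sum _ fun j _ => (hA i j).mul (hu j)

lemma hasDerivAt_quad {n : ℕ} (P P' : ℝ → Matrix (Fin n) (Fin n) ℝ)
    (x : Fin n → ℝ → ℝ) (dx : Fin n → ℝ) (t : ℝ)
    (hP : ∀ i j, HasDerivAt (fun s => P s i j) (P' t i j) t)
    (hx : ∀ i, HasDerivAt (x i) (dx i) t) :
    HasDerivAt (fun s => (fun i => x i s) ⬝ᵥ (P s *ᵥ fun i => x i s))
      (dx ⬝ᵥ (P t *ᵥ fun i => x i t) + (fun i => x i t) ⬝ᵥ (P' t *ᵥ fun i => x i t)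
        + (fun i => x i t) ⬝ᵥ (P t *ᵥ dx)) t := by
  have h1 : (fun s => (fun i => x i s) ⬝ᵥ (P s *ᵥ fun i => x i s))
      = fun s => ∑ i, ∑ j, x i s * (P s i j * x j s) := by
    funext s
    simp [dotProduct, Matrix.mulVec, Finset.mul_sum]
  rw [h1]
  have h2 : HasDerivAt (fun s => ∑ i, ∑ j, x i s * (P s i j * x j s))
      (∑ i, ∑ j, (dx i * (P t i j * x j t) +
         x i t * (P' t i j * x j t + P t i j * dx j))) t := by
    apply HasDerivAt.fun_sum
    intro i _
    apply HasDerivAt.fun_sum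
    intro j _
    exact (hx i).mul ((hP i j).mul (hx j))
  convert h2 using 1
  simp [dotProduct, Matrix.mulVec, Finset.mul_sum, Finset.sum_add_distrib, mul_add]
  ring

lemma dp_transpose {m n : Type*} [Fintype m] [Fintype n] (A : Matrix m n ℝ) (x : n → ℝ) (y : m → ℝ) :
    x ⬝ᵥ (Aᵀ *ᵥ y) = (A *ᵥ x) ⬝ᵥ y := by
  rw [Matrix.dotProduct_mulVec, Matrix.vecMul_transpose]

lemma dp_transpose' {m n : Type*} [Fintype m] [Fintype n] (A : Matrix m n ℝ) (x : n → ℝ) (y : m → ℝ) :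
    (Aᵀ *ᵥ y) ⬝ᵥ x = y ⬝ᵥ (A *ᵥ x) := by
  rw [dotProduct_comm, dp_transpose, dotProduct_comm]

lemma key_identity {n nw nd nz nI : ℕ}
    (P' P A : Matrix (Fin n) (Fin n) ℝ)
    (Bw : Matrix (Fin n) (Fin nw) ℝ) (Bd : Matrix (Fin n) (Fin nd) ℝ)
    (Cz : Matrix (Fin nz) (Fin n) ℝ) (Dzw : Matrix (Fin nz) (Fin nw) ℝ)
    (Dzd : Matrix (Fin nz) (Fin nd) ℝ)
    (CI : Matrix (Fin nI) (Fin n) ℝ) (DIw : Matrix (Fin nI) (Fin nw) ℝ)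
    (DId : Matrix (Fin nI) (Fin nd) ℝ)
    (M : Matrix (Fin nz) (Fin nz) ℝ) (ε γ : ℝ)
    (x : Fin n → ℝ) (w : Fin nw → ℝ) (d : Fin nd → ℝ) :
    (Sum.elim x (Sum.elim w d)) ⬝ᵥ ((dlmiRob P' P A (fromCols Bw Bd)
        (CIᵀ * CI) (CIᵀ * fromCols DIw DId)
        ((fromCols DIw DId)ᵀ * fromCols DIw DId -
          γ ^ 2 • fromBlocks (0 : Matrix (Fin nw) (Fin nw) ℝ) 0 0
            (1 : Matrix (Fin nd) (Fin nd) ℝ))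
        Cz (fromCols Dzw Dzd) M ε) *ᵥ (Sum.elim x (Sum.elim w d))) =
      ((A *ᵥ x + Bw *ᵥ w + Bd *ᵥ d) ⬝ᵥ (P *ᵥ x) + x ⬝ᵥ (P' *ᵥ x)
        + x ⬝ᵥ (P *ᵥ (A *ᵥ x + Bw *ᵥ w + Bd *ᵥ d)))
      + (Cz *ᵥ x + Dzw *ᵥ w + Dzd *ᵥ d) ⬝ᵥ (M *ᵥ (Cz *ᵥ x + Dzw *ᵥ w + Dzd *ᵥ d))
      + (CI *ᵥ x + DIw *ᵥ w + DId *ᵥ d) ⬝ᵥ (CI *ᵥ x + DIw *ᵥ w + DId *ᵥ d)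
      - γ ^ 2 * (d ⬝ᵥ d) + ε * (x ⬝ᵥ x + w ⬝ᵥ w + d ⬝ᵥ d) := by
  simp only [dlmiRob, Matrix.add_mulVec, Matrix.sub_mulVec, Matrix.smul_mulVec,
    Matrix.one_mulVec, Matrix.fromBlocks_mulVec, Matrix.fromCols_mulVec_sumElim,
    ← Matrix.mulVec_mulVec, Matrix.transpose_fromCols, Matrix.fromRows_mulVec,
    Matrix.zero_mulVec, dotProduct_add, sumElim_dotProduct_sumElim,
    dotProduct_sub, dotProduct_smul, dp_transpose, Matrix.mulVec_add,
    add_dotProduct, dotProduct_zero, smul_eq_mul, Sum.elim_comp_inl, Sum.elim_comp_inr, dp_transpose']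
  ring

/-- integrating the dissipation inequality given by the differential LMI
yields `x(T)ᵀP(T)x(T) + ∫ zᵀMz + ∫‖e_I‖² ≤ (γ²-ε)∫‖d‖²` for trajectories with
`x(0)=0`. -/
theorem dlmi_implies_integrated_dissipation
    {n nw nd nz nI nE : ℕ} {T : ℝ} (hT : 0 < T)
    (𝒜 : ℝ → Matrix (Fin n) (Fin n) ℝ)
    (Bw : ℝ → Matrix (Fin n) (Fin nw) ℝ)
    (Bd : ℝ → Matrix (Fin n) (Fin nd) ℝ)
    (Cz : ℝ → Matrix (Fin nz) (Fin n) ℝ)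
    (Dzw : ℝ → Matrix (Fin nz) (Fin nw) ℝ)
    (Dzd : ℝ → Matrix (Fin nz) (Fin nd) ℝ)
    (CI : ℝ → Matrix (Fin nI) (Fin n) ℝ)
    (DIw : ℝ → Matrix (Fin nI) (Fin nw) ℝ)
    (DId : ℝ → Matrix (Fin nI) (Fin nd) ℝ)
    (CE : ℝ → Matrix (Fin nE) (Fin n) ℝ)
    (h𝒜 : ∀ i j, ContinuousOn (fun t => 𝒜 t i j) (Icc 0 T))
    (hBw : ∀ i j, ContinuousOn (fun t => Bw t i j) (Icc 0 T))
    (hBd : ∀ i j, ContinuousOn (fun t => Bd t i j) (Icc 0 T))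
    (hCz : ∀ i j, ContinuousOn (fun t => Cz t i j) (Icc 0 T))
    (hDzw : ∀ i j, ContinuousOn (fun t => Dzw t i j) (Icc 0 T))
    (hDzd : ∀ i j, ContinuousOn (fun t => Dzd t i j) (Icc 0 T))
    (hCI : ∀ i j, ContinuousOn (fun t => CI t i j) (Icc 0 T))
    (hDIw : ∀ i j, ContinuousOn (fun t => DIw t i j) (Icc 0 T))
    (hDId : ∀ i j, ContinuousOn (fun t => DId t i j) (Icc 0 T))
    (hCE : ∀ i j, ContinuousOn (fun t => CE t i j) (Icc 0 T))
    (M : ℝ → Matrix (Fin nz) (Fin nz) ℝ)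
    (hMsym : ∀ t ∈ Icc (0:ℝ) T, (M t)ᵀ = M t)
    (hMcont : ∀ i j, ContinuousOn (fun t => M t i j) (Icc 0 T))
    (ε γ : ℝ) (hε : 0 < ε) (hγ : 0 < γ)
    (P P' : ℝ → Matrix (Fin n) (Fin n) ℝ)
    (hPsym : ∀ t ∈ Icc (0:ℝ) T, (P t)ᵀ = P t)
    (hPderiv : ∀ t ∈ Icc (0:ℝ) T, ∀ i j, HasDerivAt (fun s => P s i j) (P' t i j) t)
    (hP'cont : ∀ i j, ContinuousOn (fun t => P' t i j) (Icc 0 T))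
    (hDLMI : ∀ t ∈ Icc (0:ℝ) T, ∀ v : (Fin n ⊕ (Fin nw ⊕ Fin nd)) → ℝ,
      v ⬝ᵥ ((dlmiRob (P' t) (P t) (𝒜 t) (fromCols (Bw t) (Bd t))
        ((CI t)ᵀ * CI t)
        ((CI t)ᵀ * fromCols (DIw t) (DId t))
        ((fromCols (DIw t) (DId t))ᵀ * fromCols (DIw t) (DId t) -
          γ ^ 2 • fromBlocks (0 : Matrix (Fin nw) (Fin nw) ℝ) 0 0
            (1 : Matrix (Fin nd) (Fin nd) ℝ))
        (Cz t) (fromCols (Dzw t) (Dzd t)) (M t) ε) *ᵥ v) ≤ 0) :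
    ∀ (w : ℝ → Fin nw → ℝ) (d : ℝ → Fin nd → ℝ) (x : ℝ → Fin n → ℝ),
      (∀ i, ContinuousOn (fun t => w t i) (Icc 0 T)) →
      (∀ i, ContinuousOn (fun t => d t i) (Icc 0 T)) →
      x 0 = 0 →
      (∀ t ∈ Icc (0:ℝ) T, ∀ i,
        HasDerivAt (fun s => x s i)
          ((𝒜 t *ᵥ x t + Bw t *ᵥ w t + Bd t *ᵥ d t) i) t) →
      (x T) ⬝ᵥ (P T *ᵥ x T) +
        (∫ t in (0:ℝ)..T,
          (Cz t *ᵥ x t + Dzw t *ᵥ w t + Dzd t *ᵥ d t) ⬝ᵥ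
            (M t *ᵥ (Cz t *ᵥ x t + Dzw t *ᵥ w t + Dzd t *ᵥ d t))) +
        (∫ t in (0:ℝ)..T,
          (CI t *ᵥ x t + DIw t *ᵥ w t + DId t *ᵥ d t) ⬝ᵥ
            (CI t *ᵥ x t + DIw t *ᵥ w t + DId t *ᵥ d t)) ≤
      (γ ^ 2 - ε) * ∫ t in (0:ℝ)..T, (d t) ⬝ᵥ (d t) := by
  intro w d x hw hd hx0 hx'
  -- abbreviations
  set I : Set ℝ := Icc (0:ℝ) T with hI
  have hxc : ∀ i, ContinuousOn (fun t => x t i) I :=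
    fun i t ht => ((hx' t ht i).continuousAt).continuousWithinAt
  -- derivative vector
  have hxdc : ∀ i, ContinuousOn (fun t => (𝒜 t *ᵥ x t + Bw t *ᵥ w t + Bd t *ᵥ d t) i) I := by
    intro i
    have h1 := contOn_mulVec h𝒜 hxc i
    have h2 := contOn_mulVec hBw hw i
    have h3 := contOn_mulVec hBd hd i
    exact (h1.add h2).add h3
  -- continuity of z, e components
  have hzc : ∀ i, ContinuousOn (fun t => (Cz t *ᵥ x t + Dzw t *ᵥ w t + Dzd t *ᵥ d t) i) I := by
    intro i
    exact
      ((contOn_mulVec hCz hxc i).add (contOn_mulVec hDzw hw i)).add (contOn_mulVec hDzd hd i)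
  have hec : ∀ i, ContinuousOn (fun t => (CI t *ᵥ x t + DIw t *ᵥ w t + DId t *ᵥ d t) i) I := by
    intro i
    exact
      ((contOn_mulVec hCI hxc i).add (contOn_mulVec hDIw hw i)).add (contOn_mulVec hDId hd i)
  -- the storage derivative
  set W : ℝ → ℝ := fun t =>
    (𝒜 t *ᵥ x t + Bw t *ᵥ w t + Bd t *ᵥ d t) ⬝ᵥ (P t *ᵥ x t)
      + x t ⬝ᵥ (P' t *ᵥ x t)
      + x t ⬝ᵥ (P t *ᵥ (𝒜 t *ᵥ x t + Bw t *ᵥ w t + Bd t *ᵥ d t)) with hW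
  have hVd : ∀ t ∈ I, HasDerivAt (fun s => x s ⬝ᵥ (P s *ᵥ x s)) (W t) t := by
    intro t ht
    have := hasDerivAt_quad P P' (fun i s => x s i)
      (fun i => (𝒜 t *ᵥ x t + Bw t *ᵥ w t + Bd t *ᵥ d t) i) t
      (hPderiv t ht) (fun i => hx' t ht i)
    exact this
  -- pointwise dissipation inequality
  have hptwise : ∀ t ∈ I, W t
      + (Cz t *ᵥ x t + Dzw t *ᵥ w t + Dzd t *ᵥ d t) ⬝ᵥ
          (M t *ᵥ (Cz t *ᵥ x t + Dzw t *ᵥ w t + Dzd t *ᵥ d t))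
      + (CI t *ᵥ x t + DIw t *ᵥ w t + DId t *ᵥ d t) ⬝ᵥ
          (CI t *ᵥ x t + DIw t *ᵥ w t + DId t *ᵥ d t)
      ≤ (γ ^ 2 - ε) * (d t ⬝ᵥ d t) := by
    intro t ht
    have hdl := hDLMI t ht (Sum.elim (x t) (Sum.elim (w t) (d t)))
    rw [key_identity] at hdl
    have h1 : 0 ≤ x t ⬝ᵥ x t := dp_self_nonneg _
    have h2 : 0 ≤ w t ⬝ᵥ w t := dp_self_nonneg _
    simp only [hW]
    linarith [hdl, mul_nonneg hε.le h1, mul_nonneg hε.le h2]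
  -- continuity of the integrands on I
  have hPcont : ∀ i j, ContinuousOn (fun t => P t i j) I :=
    fun i j t ht => (hPderiv t ht i j).continuousAt.continuousWithinAt
  have hWc : ContinuousOn W I := by
    rw [hW]
    exact ((contOn_dot hxdc (contOn_mulVec hPcont hxc)).add
      (contOn_dot hxc (contOn_mulVec hP'cont hxc))).add
      (contOn_dot hxc (contOn_mulVec hPcont hxdc))
  have hf1c : ContinuousOn (fun t => (Cz t *ᵥ x t + Dzw t *ᵥ w t + Dzd t *ᵥ d t) ⬝ᵥ
      (M t *ᵥ (Cz t *ᵥ x t + Dzw t *ᵥ w t + Dzd t *ᵥ d t))) I :=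
    contOn_dot hzc (contOn_mulVec hMcont hzc)
  have hf2c : ContinuousOn (fun t => (CI t *ᵥ x t + DIw t *ᵥ w t + DId t *ᵥ d t) ⬝ᵥ
      (CI t *ᵥ x t + DIw t *ᵥ w t + DId t *ᵥ d t)) I :=
    contOn_dot hec hec
  have hf3c : ContinuousOn (fun t => d t ⬝ᵥ d t) I := contOn_dot hd hd
  have huIcc : uIcc (0:ℝ) T = I := uIcc_of_le hT.le
  have hintW : IntervalIntegrable W MeasureTheory.volume 0 T :=
    (hWc.mono huIcc.subset).intervalIntegrable
  have hintf1 : IntervalIntegrable (fun t => (Cz t *ᵥ x t + Dzw t *ᵥ w t + Dzd t *ᵥ d t) ⬝ᵥ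
      (M t *ᵥ (Cz t *ᵥ x t + Dzw t *ᵥ w t + Dzd t *ᵥ d t))) MeasureTheory.volume 0 T :=
    (hf1c.mono huIcc.subset).intervalIntegrable
  have hintf2 : IntervalIntegrable (fun t => (CI t *ᵥ x t + DIw t *ᵥ w t + DId t *ᵥ d t) ⬝ᵥ
      (CI t *ᵥ x t + DIw t *ᵥ w t + DId t *ᵥ d t)) MeasureTheory.volume 0 T :=
    (hf2c.mono huIcc.subset).intervalIntegrable
  have hintf3 : IntervalIntegrable (fun t => d t ⬝ᵥ d t) MeasureTheory.volume 0 T :=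
    (hf3c.mono huIcc.subset).intervalIntegrable
  -- FTC
  have hFTC : ∫ t in (0:ℝ)..T, W t = x T ⬝ᵥ (P T *ᵥ x T) := by
    have := intervalIntegral.integral_eq_sub_of_hasDerivAt
      (f := fun s => x s ⬝ᵥ (P s *ᵥ x s)) (f' := W)
      (fun t ht => hVd t (huIcc ▸ ht)) hintW
    rw [this]
    simp [hx0]
  -- integral comparison
  have hmono : (∫ t in (0:ℝ)..T, (W t
      + (Cz t *ᵥ x t + Dzw t *ᵥ w t + Dzd t *ᵥ d t) ⬝ᵥ
          (M t *ᵥ (Cz t *ᵥ x t + Dzw t *ᵥ w t + Dzd t *ᵥ d t))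
      + (CI t *ᵥ x t + DIw t *ᵥ w t + DId t *ᵥ d t) ⬝ᵥ
          (CI t *ᵥ x t + DIw t *ᵥ w t + DId t *ᵥ d t)))
      ≤ ∫ t in (0:ℝ)..T, (γ ^ 2 - ε) * (d t ⬝ᵥ d t) := by
    apply intervalIntegral.integral_mono_on hT.le
      ((hintW.add hintf1).add hintf2) (hintf3.const_mul _)
    exact hptwise
  rw [intervalIntegral.integral_add (hintW.add hintf1) hintf2,
      intervalIntegral.integral_add hintW hintf1,
      intervalIntegral.integral_const_mul, hFTC] at hmono
  linarith [hmono]
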